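/- Let H be a Hermitian n×n matrix, J ∈ ℂ^n, and a ∈ ℝ, and let A be the (n+1)×(n+1) Hermitian block matrix with top-left entry a, top-right row -J†, bottom-left column -J, and bottom-right block H. Then A is positive semidefinite and singular with kernel vector of the form (1, V)ᵀ if and only if H is positive semidefinite, H V = J, and a = V† H V. -/

import Mathlib

open Complex Matrix ComplexOrder

/-- Characterization of the bordered matrix `A = [[a, -J†],[-J, H]]` being PSD and
singular with kernel vector `(1, V)ᵀ`. -/
theorem stmt3 (n : ℕ) (H : Matrix (Fin n) (Fin n) ℂ) (hH : H.IsHermitian)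
    (J : Fin n → ℂ) (a : ℝ) (V : Fin n → ℂ)
    (A : Matrix (Fin 1 ⊕ Fin n) (Fin 1 ⊕ Fin n) ℂ)
    (hA : A = Matrix.fromBlocks !![(a : ℂ)]
      (Matrix.of fun _ i => -(starRingEnd ℂ) (J i))
      (Matrix.of fun i _ => -(J i)) H) :
    (A.PosSemidef ∧ A.mulVec (Sum.elim (fun _ => (1 : ℂ)) V) = 0) ↔
      (H.PosSemidef ∧ H.mulVec V = J ∧ (a : ℂ) = star V ⬝ᵥ H.mulVec V) := by
  subst hA
  constructor
  · rintro ⟨hpsd, hker⟩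
    rw [Matrix.fromBlocks_mulVec] at hker
    have hHV : H.mulVec V = J := by
      funext i
      have h2 := congrFun hker (Sum.inr i)
      simp only [Sum.elim_inr, Pi.add_apply, Pi.zero_apply, mulVec, dotProduct,
        Matrix.of_apply, Function.comp_apply, Fin.sum_univ_one, Sum.elim_inl,
        one_smul, mul_one, smul_eq_mul] at h2
      simp only [mulVec, dotProduct]
      linear_combination h2
    have hHpsd : H.PosSemidef := by
      have hsub := hpsd.submatrix Sum.inr
      have heq : (Matrix.fromBlocks !![(a : ℂ)]
          (Matrix.of fun _ i => -(starRingEnd ℂ) (J i))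
          (Matrix.of fun i _ => -(J i)) H).submatrix Sum.inr Sum.inr = H := by
        ext i j; simp
      rwa [heq] at hsub
    refine ⟨hHpsd, hHV, ?_⟩
    have h1 := congrFun hker (Sum.inl 0)
    simp only [Sum.elim_inl, Pi.add_apply, Pi.zero_apply, mulVec, dotProduct,
      Matrix.of_apply, Function.comp_apply, Fin.sum_univ_one, mul_one,
      Matrix.cons_val', Matrix.cons_val_zero, Matrix.empty_val',
      Matrix.cons_val_fin_one, Sum.elim_inl, Sum.elim_inr, neg_mul] at h1
    have ha : (a : ℂ) = star J ⬝ᵥ V := by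
      simp only [dotProduct, Pi.star_apply, RCLike.star_def]
      rw [Finset.sum_neg_distrib] at h1
      linear_combination h1
    rw [ha, ← hHV, star_mulVec, hH.eq, ← Matrix.dotProduct_mulVec]
  · rintro ⟨hHpsd, hJ, ha⟩
    have haR : (a : ℂ) = star J ⬝ᵥ V := by
      have h := congrArg star ha
      rw [Matrix.star_dotProduct, star_star] at h
      rw [hJ] at h ha
      rw [RCLike.star_def, Complex.conj_ofReal] at h
      exact h
    constructor
    · set C : Matrix (Fin n) (Fin 1) ℂ := Matrix.of fun i _ => -V i with hC
      set S : Matrix (Fin 1 ⊕ Fin n) (Fin 1 ⊕ Fin n) ℂ :=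
        Matrix.fromBlocks 1 0 C 1 with hS
      set D : Matrix (Fin 1 ⊕ Fin n) (Fin 1 ⊕ Fin n) ℂ :=
        Matrix.fromBlocks 0 0 0 H with hD
      have hDpsd : D.PosSemidef := by
        obtain ⟨B, hB⟩ : ∃ B : Matrix (Fin n) (Fin n) ℂ, H = Bᴴ * B := by
          open scoped MatrixOrder in
          obtain ⟨B, hB⟩ := CStarAlgebra.nonneg_iff_eq_star_mul_self.mp hHpsd.nonneg
          exact ⟨B, hB⟩
        have hBB : D = (Matrix.fromBlocks 0 0 0 B)ᴴ * (Matrix.fromBlocks 0 0 0 B) := by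
          rw [Matrix.fromBlocks_conjTranspose, Matrix.fromBlocks_multiply]
          simp [hD, hB]
        rw [hBB]
        exact Matrix.posSemidef_conjTranspose_mul_self _
      have key : Matrix.fromBlocks !![(a : ℂ)]
          (Matrix.of fun _ i => -(starRingEnd ℂ) (J i))
          (Matrix.of fun i _ => -(J i)) H = Sᴴ * D * S := by
        rw [hS, hD, Matrix.fromBlocks_conjTranspose, Matrix.fromBlocks_multiply,
          Matrix.fromBlocks_multiply]
        have hvH : star V ᵥ* H = star J := by
          rw [← hJ, star_mulVec, hH.eq]
        have hCH : Cᴴ * H = Matrix.of fun _ i => -(starRingEnd ℂ) (J i) := by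
          ext k i
          have hvHi := congrFun hvH i
          simp only [vecMul, dotProduct, Pi.star_apply, RCLike.star_def] at hvHi
          simp only [Matrix.mul_apply, Matrix.conjTranspose_apply, hC, Matrix.of_apply,
            map_neg, neg_mul, RCLike.star_def]
          rw [Finset.sum_neg_distrib, hvHi]
        have hHC : H * C = Matrix.of fun i _ => -(J i) := by
          ext i k
          have hJi := congrFun hJ i
          simp only [mulVec, dotProduct] at hJi
          simp only [Matrix.mul_apply, hC, Matrix.of_apply, mul_neg]
          rw [Finset.sum_neg_distrib, hJi]
        have hCHC : Cᴴ * (H * C) = !![(a : ℂ)] := by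
          rw [hHC]
          ext k l
          have hk : k = 0 := Subsingleton.elim _ _
          have hl : l = 0 := Subsingleton.elim _ _
          subst hk hl
          simp only [Matrix.mul_apply, Matrix.conjTranspose_apply, Matrix.of_apply, hC,
            Matrix.cons_val', Matrix.cons_val_zero, Matrix.empty_val',
            Matrix.cons_val_fin_one, map_neg, neg_mul, neg_neg]
          rw [ha, hJ]
          simp only [dotProduct, Pi.star_apply, RCLike.star_def, map_neg,
            neg_mul, mul_neg, neg_neg]
        simp only [Matrix.conjTranspose_one, Matrix.conjTranspose_zero,
          Matrix.one_mul, Matrix.mul_one, Matrix.zero_mul, Matrix.mul_zero,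
          add_zero, zero_add]
        rw [Matrix.mul_assoc, hCHC, hCH, hHC]
      rw [key]
      exact hDpsd.conjTranspose_mul_mul_same S
    · funext p
      rw [Matrix.fromBlocks_mulVec]
      cases p with
      | inl k =>
        simp only [Sum.elim_inl, Pi.add_apply, Pi.zero_apply, mulVec, dotProduct,
          Matrix.of_apply, Function.comp_apply, Fin.sum_univ_one, mul_one,
          Matrix.cons_val', Matrix.cons_val_zero, Matrix.empty_val',
          Matrix.cons_val_fin_one, Sum.elim_inl, Sum.elim_inr, neg_mul]
        have h := haR
        simp only [dotProduct, Pi.star_apply, RCLike.star_def] at h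
        rw [Finset.sum_neg_distrib, h]
        simp [Matrix.cons_val_zero]
      | inr i =>
        simp only [Sum.elim_inr, Pi.add_apply, Pi.zero_apply, mulVec, dotProduct,
          Matrix.of_apply, Function.comp_apply, Fin.sum_univ_one, Sum.elim_inl,
          Sum.elim_inr, one_smul, mul_one, smul_eq_mul]
        have hJi := congrFun hJ i
        simp only [mulVec, dotProduct] at hJi
        rw [hJi]
        ring
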